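/- Let d ≥ 1 and n ≥ 1, and let T be a symmetric real tensor of order d and size n × ⋯ × n. Then T is symmetrically orthogonally decomposable if and only if the contraction T•₁T is fully symmetric, i.e. for all indices, the entry (T•₁T)_{i_2…i_d j_2…j_d} = Σ_{m=1}^n T_{m i_2…i_d} T_{m j_2…j_d} is unchanged under every permutation of the 2d−2 indices i_2,…,i_d,j_2,…,j_d. -/

import Mathlib

open Finset

/-- A tensor of order `d` and size `n × ⋯ × n` is symmetric if its entries are invariant under
every permutation of the `d` indices. -/
def IsSymTensor {d n : ℕ} (T : (Fin d → Fin n) → ℝ) : Prop :=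
  ∀ (σ : Equiv.Perm (Fin d)) (idx : Fin d → Fin n), T (idx ∘ σ) = T idx

/-- A symmetric tensor is symmetrically orthogonally decomposable (symmetrically odeco) if it
can be written as `∑ i, λ i • (v i)^{⊗d}` with `v 0, …, v (r-1)` orthonormal in `ℝ^n`. -/
def IsSymOdeco {d n : ℕ} (T : (Fin d → Fin n) → ℝ) : Prop :=
  ∃ (r : ℕ) (lam : Fin r → ℝ) (v : Fin r → Fin n → ℝ),
    (∀ i i' : Fin r, (∑ a, v i a * v i' a) = if i = i' then 1 else 0) ∧
    ∀ idx : Fin d → Fin n, T idx = ∑ i, lam i * ∏ j, v i (idx j)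

lemma euclid_sum_apply {n : ℕ} {ι : Type*} (s : Finset ι) (f : ι → EuclideanSpace ℝ (Fin n))
    (m : Fin n) : (∑ i ∈ s, f i) m = ∑ i ∈ s, f i m := by
  classical
  induction s using Finset.cons_induction with
  | empty => simp [PiLp.zero_apply]
  | cons i s hi ih => rw [Finset.sum_cons, Finset.sum_cons, PiLp.add_apply, ih]

lemma simdiag {n : ℕ} {ι : Type*} (L : ι → Module.End ℝ (EuclideanSpace ℝ (Fin n)))
    (hsym : ∀ i, (L i).IsSymmetric) (hcomm : ∀ i j, Commute (L i) (L j)) :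
    ∃ (q : OrthonormalBasis (Fin n) ℝ (EuclideanSpace ℝ (Fin n))) (μ : ι → Fin n → ℝ),
      ∀ i a, L i (q a) = μ i a • q a := by
  classical
  set V : (ι → ℝ) → Submodule ℝ (EuclideanSpace ℝ (Fin n)) :=
    fun χ => ⨅ j, Module.End.eigenspace (L j) (χ j) with hV
  have hInt : DirectSum.IsInternal V :=
    LinearMap.IsSymmetric.LinearMap.IsSymmetric.directSum_isInternal_of_pairwise_commute hsym
      (fun i j _ => hcomm i j)
  have hind := hInt.submodule_iSupIndep
  have : Fintype {χ : ι → ℝ // V χ ≠ ⊥} := hind.fintypeNeBotOfFiniteDimensional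
  have hInt' : DirectSum.IsInternal (fun χ : {χ : ι → ℝ // V χ ≠ ⊥} => V χ.1) :=
    DirectSum.isInternal_ne_bot_iff.mpr hInt
  have hOrth := LinearMap.IsSymmetric.orthogonalFamily_iInf_eigenspaces hsym (T := L)
  have hOrth' : OrthogonalFamily ℝ (fun χ : {χ : ι → ℝ // V χ ≠ ⊥} => V χ.1)
      (fun χ => (V χ.1).subtypeₗᵢ) := hOrth.comp Subtype.val_injective
  have hfr : Module.finrank ℝ (EuclideanSpace ℝ (Fin n)) = n := finrank_euclideanSpace_fin
  refine ⟨hInt'.subordinateOrthonormalBasis hfr hOrth',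
    fun i a => (hInt'.subordinateOrthonormalBasisIndex hfr a hOrth').1 i, fun i a => ?_⟩
  have h := hInt'.subordinateOrthonormalBasis_subordinate hfr a hOrth'
  exact Module.End.mem_eigenspace_iff.mp ((Submodule.mem_iInf _).mp h i)

lemma rank1_aux {n D : ℕ} (U : (Fin D → Fin n) → ℝ) (v : Fin n → ℝ) (i0 : Fin n)
    (hswap : ∀ (idx : Fin D → Fin n) (j : Fin D),
      v i0 * U idx = v (idx j) * U (Function.update idx j i0)) (idx : Fin D → Fin n) :
    v i0 ^ D * U idx = U (fun _ => i0) * ∏ j, v (idx j) := by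
  classical
  have key : ∀ k, k ≤ D → v i0 ^ k * U idx =
      U (fun j : Fin D => if (j : ℕ) < k then i0 else idx j) *
        ∏ j : Fin D, (if (j : ℕ) < k then v (idx j) else 1) := by
    intro k
    induction k with
    | zero => intro _; simp
    | succ k ih =>
      intro hk
      have hkD : k < D := Nat.lt_of_succ_le hk
      set jk : Fin D := ⟨k, hkD⟩ with hjk
      have h1 : v i0 ^ (k + 1) * U idx = v i0 * (v i0 ^ k * U idx) := by ring
      rw [h1, ih (le_of_lt hkD), ← mul_assoc,
        hswap (fun j : Fin D => if (j : ℕ) < k then i0 else idx j) jk]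
      have e1 : (if ((jk : Fin D) : ℕ) < k then i0 else idx jk) = idx jk := by
        simp [hjk]
      have e2 : Function.update (fun j : Fin D => if (j : ℕ) < k then i0 else idx j) jk i0 =
          fun j : Fin D => if (j : ℕ) < k + 1 then i0 else idx j := by
        funext j
        rcases eq_or_ne j jk with rfl | hj
        · simp [Function.update_self, hjk]
        · have hjv : (j : ℕ) ≠ k := by
            intro hh; exact hj (Fin.ext (by simp [hjk, hh]))
          rw [Function.update_of_ne hj]
          simp only [Nat.lt_succ_iff_lt_or_eq, hjv, or_false]
      have e3 : (fun j : Fin D => if (j : ℕ) < k + 1 then v (idx j) else 1) =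
          Function.update (fun j : Fin D => if (j : ℕ) < k then v (idx j) else 1) jk
            (v (idx jk)) := by
        funext j
        rcases eq_or_ne j jk with rfl | hj
        · simp [Function.update_self, hjk]
        · have hjv : (j : ℕ) ≠ k := by
            intro hh; exact hj (Fin.ext (by simp [hjk, hh]))
          rw [Function.update_of_ne hj]
          simp only [Nat.lt_succ_iff_lt_or_eq, hjv, or_false]
      rw [e1, e2, e3, Finset.prod_update_of_mem (Finset.mem_univ jk),
        Finset.sdiff_singleton_eq_erase]
      have e5 : (∏ x ∈ Finset.univ.erase jk, (if (x : ℕ) < k then v (idx x) else 1)) =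
          ∏ x : Fin D, (if (x : ℕ) < k then v (idx x) else 1) :=
        Finset.prod_erase _ (by simp [hjk])
      rw [e5]
      ring
  have := key D le_rfl
  have e4 : (fun j : Fin D => if (j : ℕ) < D then i0 else idx j) = fun _ => i0 := by
    funext j; simp [j.isLt]
  have e5 : (fun j : Fin D => if (j : ℕ) < D then v (idx j) else 1) = fun j => v (idx j) := by
    funext j; simp [j.isLt]
  rw [this, e4]
  exact congrArg _ (Finset.prod_congr rfl fun j _ => by simp [j.isLt])

lemma reverse_dir {e n : ℕ} (T : (Fin (e + 1 + 1) → Fin n) → ℝ) (hT : IsSymTensor T)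
    (hc : ∀ (β γ : Fin e → Fin n) (m k : Fin n),
      (∑ i : Fin n, T (Fin.cons i (Fin.cons k β)) * T (Fin.cons i (Fin.cons m γ))) =
        ∑ i : Fin n, T (Fin.cons i (Fin.cons m β)) * T (Fin.cons i (Fin.cons k γ))) :
    IsSymOdeco T := by
  classical
  -- swapping the first two indices of T
  have hT2 : ∀ (i m : Fin n) (β : Fin e → Fin n),
      T (Fin.cons i (Fin.cons m β)) = T (Fin.cons m (Fin.cons i β)) := by
    intro i m β
    have h := hT (Equiv.swap 0 1) (Fin.cons m (Fin.cons i β))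
    rw [← h]
    congr 1
    funext x
    refine Fin.cases ?_ (fun j => ?_) x
    · simp [Equiv.swap_apply_left]
    · refine Fin.cases ?_ (fun j' => ?_) j
      · simp [Equiv.swap_apply_right, Fin.succ_zero_eq_one]
      · have h1 : (j'.succ.succ : Fin (e + 1 + 1)) ≠ 0 := Fin.succ_ne_zero _
        have h2 : (j'.succ.succ : Fin (e + 1 + 1)) ≠ 1 := by
          intro hh
          rw [← Fin.succ_zero_eq_one, Fin.succ_inj] at hh
          exact Fin.succ_ne_zero j' hh
        rw [Function.comp_apply, Equiv.swap_apply_of_ne_of_ne h1 h2]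
        simp [Fin.cons_succ]
  -- permuting trailing indices of T
  have hTail : ∀ (σ : Equiv.Perm (Fin (e + 1))) (m : Fin n) (idx : Fin (e + 1) → Fin n),
      T (Fin.cons m (idx ∘ σ)) = T (Fin.cons m idx) := by
    intro σ m idx
    have h := hT (Equiv.Perm.decomposeFin.symm (0, σ)) (Fin.cons m idx)
    rw [← h]
    congr 1
    funext x
    refine Fin.cases ?_ (fun j => ?_) x
    · simp
    · simp [Equiv.Perm.decomposeFin_symm_apply_succ, Equiv.swap_self]
  -- the slice matrices
  set M : (Fin e → Fin n) → Matrix (Fin n) (Fin n) ℝ :=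
    fun β => Matrix.of (fun m i => T (Fin.cons m (Fin.cons i β))) with hM
  have hherm : ∀ β, (M β).IsHermitian := by
    intro β
    ext i j
    simp only [Matrix.conjTranspose_apply, hM, Matrix.of_apply, star_trivial]
    exact hT2 j i β
  have hMcomm : ∀ β γ, Commute (M β) (M γ) := by
    intro β γ
    ext m k
    rw [Matrix.mul_apply, Matrix.mul_apply]
    have l1 : (∑ i, M β m i * M γ i k) = ∑ i, T (Fin.cons i (Fin.cons m β)) *
        T (Fin.cons i (Fin.cons k γ)) := by
      refine Finset.sum_congr rfl fun i _ => ?_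
      simp only [hM, Matrix.of_apply]
      rw [hT2 m i β]
    have l2 : (∑ i, M γ m i * M β i k) = ∑ i, T (Fin.cons i (Fin.cons k β)) *
        T (Fin.cons i (Fin.cons m γ)) := by
      refine Finset.sum_congr rfl fun i _ => ?_
      simp only [hM, Matrix.of_apply]
      rw [hT2 m i γ, hT2 i k β, hT2 k i β, mul_comm]
    rw [l1, l2, ← hc β γ m k]
  -- the corresponding endomorphisms
  set L : (Fin e → Fin n) → Module.End ℝ (EuclideanSpace ℝ (Fin n)) :=
    fun β => Matrix.toEuclideanLin (M β) with hL
  have hLsym : ∀ β, (L β).IsSymmetric := fun β =>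
    Matrix.isHermitian_iff_isSymmetric.mp (hherm β)
  have hLcomm : ∀ β γ, Commute (L β) (L γ) := by
    intro β γ
    have h2 : ∀ P Q : Matrix (Fin n) (Fin n) ℝ,
        Matrix.toEuclideanLin (P * Q) = Matrix.toEuclideanLin P * Matrix.toEuclideanLin Q := by
      intro P Q
      rw [Matrix.toEuclideanLin_eq_toLin, Matrix.toLin_mul _ (PiLp.basisFun 2 ℝ (Fin n)) _,
        Module.End.mul_eq_comp]
    unfold Commute SemiconjBy
    rw [hL, ← h2, ← h2, hMcomm β γ]
  have hLapp : ∀ β (x : EuclideanSpace ℝ (Fin n)) (m : Fin n),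
      L β x m = ∑ i, T (Fin.cons m (Fin.cons i β)) * x i := by
    intro β x m
    simp [hL, hM, Matrix.toEuclideanLin_apply, Matrix.mulVec, dotProduct]
  obtain ⟨q, μ, hq⟩ := simdiag L hLsym hLcomm
  -- orthonormality of the columns
  have qcol : ∀ a b, (∑ m, q a m * q b m) = if a = b then 1 else 0 := by
    intro a b
    have h := orthonormal_iff_ite.mp q.orthonormal a b
    simpa [PiLp.inner_apply, RCLike.inner_apply, conj_trivial, mul_comm] using h
  -- expansion of coordinate vectors
  have hsingle : ∀ i : Fin n, (EuclideanSpace.single i (1 : ℝ)) = ∑ a, q a i • q a := by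
    intro i
    have h := q.sum_repr' (EuclideanSpace.single i (1 : ℝ))
    rw [← h]
    refine Finset.sum_congr rfl fun a _ => ?_
    congr 1
    simp [EuclideanSpace.inner_single_right]
  -- orthonormality of the rows
  have qrow : ∀ m m', (∑ a, q a m * q a m') = if m = m' then 1 else 0 := by
    intro m m'
    have h := congrArg (fun x : EuclideanSpace ℝ (Fin n) => x m) (hsingle m')
    simp only [euclid_sum_apply, PiLp.smul_apply, smul_eq_mul] at h
    rw [EuclideanSpace.single_apply] at h
    rw [Finset.sum_congr rfl fun a (_ : a ∈ univ) => mul_comm (q a m) (q a m')]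
    exact h.symm
  -- the entries of the slices in terms of eigendata
  have hA : ∀ (β : Fin e → Fin n) m i,
      T (Fin.cons m (Fin.cons i β)) = ∑ a, μ β a * q a m * q a i := by
    intro β m i
    have h1 : L β (EuclideanSpace.single i (1 : ℝ)) m = T (Fin.cons m (Fin.cons i β)) := by
      rw [hLapp]
      simp [EuclideanSpace.single_apply]
    have h2 : L β (EuclideanSpace.single i (1 : ℝ)) = ∑ a, q a i • (μ β a • q a) := by
      rw [hsingle, map_sum]
      exact Finset.sum_congr rfl fun a _ => by rw [map_smul, hq β a]
    rw [← h1, h2, euclid_sum_apply]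
    refine Finset.sum_congr rfl fun a _ => ?_
    simp only [PiLp.smul_apply, smul_eq_mul]
    ring
  -- the contracted tensors
  set U : Fin n → (Fin (e + 1) → Fin n) → ℝ :=
    fun a idx => ∑ m, q a m * T (Fin.cons m idx) with hU
  have hUsym : ∀ a (σ : Equiv.Perm (Fin (e + 1))) idx, U a (idx ∘ σ) = U a idx := by
    intro a σ idx
    exact Finset.sum_congr rfl fun m _ => by rw [hTail σ m idx]
  have hUfac : ∀ a i (β : Fin e → Fin n), U a (Fin.cons i β) = q a i * μ β a := by
    intro a i β
    have h1 : U a (Fin.cons i β) = ∑ m, ∑ b, q a m * (μ β b * q b m * q b i) := by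
      refine Finset.sum_congr rfl fun m _ => ?_
      rw [hA β m i, Finset.mul_sum]
    rw [h1, Finset.sum_comm]
    have h2 : ∀ b, (∑ m, q a m * (μ β b * q b m * q b i)) =
        (μ β b * q b i) * ∑ m, q a m * q b m := by
      intro b
      rw [Finset.mul_sum]
      exact Finset.sum_congr rfl fun m _ => by ring
    rw [Finset.sum_congr rfl fun b _ => h2 b]
    simp only [qcol, mul_ite, mul_one, mul_zero]
    rw [Finset.sum_ite_eq univ a (fun b => μ β b * q b i)]
    simp [mul_comm]
  have hRecov : ∀ m idx, T (Fin.cons m idx) = ∑ a, q a m * U a idx := by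
    intro m idx
    have h1 : (∑ a, q a m * U a idx) =
        ∑ m', (∑ a, q a m * q a m') * T (Fin.cons m' idx) := by
      simp only [hU, Finset.mul_sum]
      rw [Finset.sum_comm]
      refine Finset.sum_congr rfl fun m' _ => ?_
      rw [Finset.sum_mul]
      exact Finset.sum_congr rfl fun a _ => by ring
    rw [h1]
    simp only [qrow, ite_mul, one_mul, zero_mul]
    rw [Finset.sum_ite_eq univ m (fun m' => T (Fin.cons m' idx)), if_pos (Finset.mem_univ m)]
  -- each column has a nonzero coordinate
  have hqne : ∀ a, ∃ i0, q a i0 ≠ 0 := by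
    intro a
    by_contra hcon
    push_neg at hcon
    have h0 := qcol a a
    rw [if_pos rfl, Finset.sum_eq_zero (fun m _ => by rw [hcon m, mul_zero])] at h0
    exact zero_ne_one h0
  choose i0 hi0 using hqne
  -- the swap identity for U
  have hswap : ∀ a (idx : Fin (e + 1) → Fin n) (j : Fin (e + 1)),
      q a (i0 a) * U a idx = q a (idx j) * U a (Function.update idx j (i0 a)) := by
    intro a idx j
    set τ : Equiv.Perm (Fin (e + 1)) := Equiv.swap 0 j with hτ
    have fac : ∀ g : Fin (e + 1) → Fin n, U a g = q a (g 0) * μ (Fin.tail g) a := by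
      intro g
      have h := hUfac a (g 0) (Fin.tail g)
      rwa [Fin.cons_self_tail] at h
    have h1 : U a idx = q a (idx j) * μ (Fin.tail (idx ∘ τ)) a := by
      rw [← hUsym a τ idx, fac (idx ∘ τ)]
      have : (idx ∘ τ) 0 = idx j := by simp [hτ, Equiv.swap_apply_left]
      rw [this]
    have h2 : U a (Function.update idx j (i0 a)) =
        q a (i0 a) * μ (Fin.tail (idx ∘ τ)) a := by
      rw [← hUsym a τ _, fac ((Function.update idx j (i0 a)) ∘ τ)]
      have e0 : ((Function.update idx j (i0 a)) ∘ τ) 0 = i0 a := by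
        show Function.update idx j (i0 a) (τ 0) = i0 a
        rw [hτ, Equiv.swap_apply_left, Function.update_self]
      have etail : Fin.tail ((Function.update idx j (i0 a)) ∘ τ) = Fin.tail (idx ∘ τ) := by
        funext k
        simp only [Fin.tail, Function.comp_apply]
        rw [Function.update_of_ne]
        intro hh
        exact Fin.succ_ne_zero k (τ.injective (by rw [hh, hτ, Equiv.swap_apply_left]))
      rw [e0, etail]
    rw [h1, h2]
    ring
  -- U is a scaled rank-one tensor
  set c : Fin n → ℝ := fun a => U a (fun _ => i0 a) / q a (i0 a) ^ (e + 1) with hcdef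
  have hU1 : ∀ a idx, U a idx = c a * ∏ j, q a (idx j) := by
    intro a idx
    have h := rank1_aux (U a) (fun m => q a m) (i0 a) (hswap a) idx
    have hp : q a (i0 a) ^ (e + 1) ≠ 0 := pow_ne_zero _ (hi0 a)
    rw [hcdef]
    field_simp
    rw [mul_comm (U a idx) _, h]
  -- assemble
  refine ⟨n, c, fun a m => q a m, fun a b => qcol a b, fun idx => ?_⟩
  conv_lhs => rw [← Fin.cons_self_tail idx]
  rw [hRecov]
  refine Finset.sum_congr rfl fun a _ => ?_
  rw [hU1]
  rw [show (∏ x : Fin (e + 1 + 1), q a (idx x)) =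
      q a (idx 0) * ∏ j : Fin (e + 1), q a (idx j.succ) from Fin.prod_univ_succ _]
  rw [show (∏ j : Fin (e + 1), q a (Fin.tail idx j)) =
      ∏ j : Fin (e + 1), q a (idx j.succ) from rfl]
  ring

/-- A symmetric tensor `T` of order `d + 1` -/
theorem symOdeco_iff_contraction_fully_symmetric
    (d n : ℕ) (hn : 1 ≤ n) (T : (Fin (d + 1) → Fin n) → ℝ) (hT : IsSymTensor T) :
    IsSymOdeco T ↔
      ∀ (σ : Equiv.Perm (Fin d ⊕ Fin d)) (f : Fin d ⊕ Fin d → Fin n),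
        (∑ m : Fin n, T (Fin.cons m ((f ∘ σ) ∘ Sum.inl)) * T (Fin.cons m ((f ∘ σ) ∘ Sum.inr))) =
        ∑ m : Fin n, T (Fin.cons m (f ∘ Sum.inl)) * T (Fin.cons m (f ∘ Sum.inr)) := by
  classical
  constructor
  · rintro ⟨r, lam, v, horth, hrep⟩ σ f
    have key : ∀ g g' : Fin d → Fin n,
        (∑ m, T (Fin.cons m g) * T (Fin.cons m g')) =
          ∑ i, (lam i * ∏ j, v i (g j)) * (lam i * ∏ j, v i (g' j)) := by
      intro g g'
      have hTc : ∀ (m : Fin n) (g : Fin d → Fin n),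
          T (Fin.cons m g) = ∑ i, (lam i * ∏ j, v i (g j)) * v i m := by
        intro m g
        rw [hrep]
        refine Finset.sum_congr rfl fun i _ => ?_
        rw [Fin.prod_univ_succ]
        simp only [Fin.cons_zero, Fin.cons_succ]
        ring
      calc (∑ m, T (Fin.cons m g) * T (Fin.cons m g'))
          = ∑ m, ∑ i, ∑ k, (((lam i * ∏ j, v i (g j)) * v i m) *
              ((lam k * ∏ j, v k (g' j)) * v k m)) := by
            refine Finset.sum_congr rfl fun m _ => ?_
            rw [hTc m g, hTc m g', Finset.sum_mul_sum]
        _ = ∑ i, ∑ k, (((lam i * ∏ j, v i (g j)) * (lam k * ∏ j, v k (g' j))) *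
              ∑ m, v i m * v k m) := by
            rw [Finset.sum_comm]
            refine Finset.sum_congr rfl fun i _ => ?_
            rw [Finset.sum_comm]
            refine Finset.sum_congr rfl fun k _ => ?_
            rw [Finset.mul_sum]
            exact Finset.sum_congr rfl fun m _ => by ring
        _ = ∑ i, (lam i * ∏ j, v i (g j)) * (lam i * ∏ j, v i (g' j)) := by
            refine Finset.sum_congr rfl fun i _ => ?_
            simp only [horth, mul_ite, mul_one, mul_zero]
            rw [Finset.sum_ite_eq univ i
              (fun k => (lam i * ∏ j, v i (g j)) * (lam k * ∏ j, v k (g' j))),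
              if_pos (Finset.mem_univ i)]
    rw [key ((f ∘ σ) ∘ Sum.inl) ((f ∘ σ) ∘ Sum.inr), key (f ∘ Sum.inl) (f ∘ Sum.inr)]
    refine Finset.sum_congr rfl fun i _ => ?_
    have e1 : ∀ g : Fin d ⊕ Fin d → Fin n,
        ((∏ j, v i ((g ∘ Sum.inl) j)) * (∏ j, v i ((g ∘ Sum.inr) j))) =
          ∏ x, v i (g x) := by
      intro g
      rw [Fintype.prod_sum_type (fun x => v i (g x))]
      rfl
    calc (lam i * ∏ j, v i (((f ∘ σ) ∘ Sum.inl) j)) *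
          (lam i * ∏ j, v i (((f ∘ σ) ∘ Sum.inr) j))
        = lam i ^ 2 * ((∏ j, v i (((f ∘ σ) ∘ Sum.inl) j)) *
            (∏ j, v i (((f ∘ σ) ∘ Sum.inr) j))) := by ring
      _ = lam i ^ 2 * ∏ x, v i ((f ∘ σ) x) := by rw [e1 (f ∘ σ)]
      _ = lam i ^ 2 * ∏ x, v i (f x) := by
          rw [show (∏ x, v i ((f ∘ σ) x)) = ∏ x, v i (f (σ x)) from rfl,
            Equiv.prod_comp σ (fun x => v i (f x))]
      _ = (lam i * ∏ j, v i ((f ∘ Sum.inl) j)) * (lam i * ∏ j, v i ((f ∘ Sum.inr) j)) := by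
          rw [← e1 f]; ring
  · intro hsymm
    cases d with
    | zero =>
      haveI : Subsingleton (Fin (0 + 1)) := ⟨fun a b => Fin.ext (by omega)⟩
      by_cases h0 : ∀ idx : Fin 1 → Fin n, T idx = 0
      · exact ⟨0, Fin.elim0, Fin.elim0, fun i => i.elim0, fun idx => by rw [h0 idx]; simp⟩
      · push_neg at h0
        obtain ⟨idx0, hidx0⟩ := h0
        set s : ℝ := ∑ m, T (fun _ => m) ^ 2 with hs
        have hspos : 0 < s := by
          have heq : (fun _ : Fin 1 => idx0 0) = idx0 :=
            funext fun j => congrArg idx0 (Subsingleton.elim 0 j)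
          have hterm : 0 < T (fun _ => idx0 0) ^ 2 := by
            rw [heq]
            positivity
          calc (0:ℝ) < T (fun _ => idx0 0) ^ 2 := hterm
            _ ≤ s := Finset.single_le_sum (f := fun m => T (fun _ => m) ^ 2)
                (fun m _ => sq_nonneg _) (Finset.mem_univ (idx0 0))
        have hsqrt : Real.sqrt s ≠ 0 := ne_of_gt (Real.sqrt_pos.mpr hspos)
        refine ⟨1, fun _ => Real.sqrt s, fun _ m => T (fun _ => m) / Real.sqrt s, ?_, ?_⟩
        · intro i i'
          rw [if_pos (Subsingleton.elim i i')]
          have hterm : ∀ a : Fin n, T (fun _ => a) / Real.sqrt s *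
              (T (fun _ => a) / Real.sqrt s) = T (fun _ => a) ^ 2 / s := by
            intro a
            rw [div_mul_div_comm, Real.mul_self_sqrt hspos.le, sq]
          rw [Finset.sum_congr rfl fun a _ => hterm a, ← Finset.sum_div, ← hs,
            div_self (ne_of_gt hspos)]
        · intro idx
          rw [Fin.sum_univ_one, Fin.prod_univ_one, mul_comm, div_mul_cancel₀ _ hsqrt]
          exact congrArg T (funext fun j => congrArg idx (Subsingleton.elim 0 j)).symm
    | succ e =>
      apply reverse_dir T hT
      intro β γ m k
      have h := hsymm (Equiv.swap (Sum.inl 0) (Sum.inr 0))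
        (Sum.elim (Fin.cons m β) (Fin.cons k γ))
      have e1 : ((Sum.elim (Fin.cons m β) (Fin.cons k γ) ∘
          (Equiv.swap (Sum.inl (0 : Fin (e+1))) (Sum.inr (0 : Fin (e+1))))) ∘ Sum.inl) =
          Fin.cons k β := by
        funext x
        refine Fin.cases ?_ (fun j => ?_) x
        · simp [Equiv.swap_apply_left]
        · have h1 : (Sum.inl j.succ : Fin (e+1) ⊕ Fin (e+1)) ≠ Sum.inl 0 := by
            simp [Fin.succ_ne_zero]
          have h2 : (Sum.inl j.succ : Fin (e+1) ⊕ Fin (e+1)) ≠ Sum.inr 0 := by simp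
          simp [Equiv.swap_apply_of_ne_of_ne h1 h2]
      have e2 : ((Sum.elim (Fin.cons m β) (Fin.cons k γ) ∘
          (Equiv.swap (Sum.inl (0 : Fin (e+1))) (Sum.inr (0 : Fin (e+1))))) ∘ Sum.inr) =
          Fin.cons m γ := by
        funext x
        refine Fin.cases ?_ (fun j => ?_) x
        · simp [Equiv.swap_apply_right]
        · have h1 : (Sum.inr j.succ : Fin (e+1) ⊕ Fin (e+1)) ≠ Sum.inl 0 := by simp
          have h2 : (Sum.inr j.succ : Fin (e+1) ⊕ Fin (e+1)) ≠ Sum.inr 0 := by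
            simp [Fin.succ_ne_zero]
          simp [Equiv.swap_apply_of_ne_of_ne h1 h2]
      have e3 : (Sum.elim (Fin.cons m β) (Fin.cons k γ) ∘ Sum.inl) = Fin.cons m β :=
        Sum.elim_comp_inl _ _
      have e4 : (Sum.elim (Fin.cons m β) (Fin.cons k γ) ∘ Sum.inr) = Fin.cons k γ :=
        Sum.elim_comp_inr _ _
      rw [e1, e2, e3, e4] at h
      exact h
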